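/- Let H be a labelled multihypergraph on a finite vertex set V with all hyperedges of size at least 2, let F = (F_e) be a tree assignment of H with labelled union G = ⨄_e F_e, and let 𝒯 = (T_0, …, T_{k−1}) be a k-tree decomposition of G. For every partition 𝒫 of V, w_H(𝒫) − k(|𝒫| − 1) = B_𝒯(𝒫) − Λ_F(𝒫), where Λ_F(𝒫) = Σ_{e∈E(H)} (cr_{F_e}(𝒫) − p_𝒫(e) + 1) and B_𝒯(𝒫) = Σ_{i=0}^{k−1} cr_{T_i}(𝒫) − k(|𝒫| − 1). Moreover Λ_F(𝒫) ≥ 0 and B_𝒯(𝒫) ≥ 0; consequently H is k-weakly-partition-connected if and only if Λ_F(𝒫) ≤ B_𝒯(𝒫) for every partition 𝒫 of V. -/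

import Mathlib

open scoped Classical
noncomputable section

variable {W : Type*}

/-- `A` is the edge set of a tree with vertex set `e`: no loops, all endpoints in `e`,
acyclic, and any two vertices of `e` are connected. -/
def IsTreeOn (e : Finset W) (A : Finset (Sym2 W)) : Prop :=
  (∀ s ∈ A, ¬ s.IsDiag) ∧
  (∀ s ∈ A, ∀ v ∈ s, v ∈ e) ∧
  (SimpleGraph.fromEdgeSet (A : Set (Sym2 W))).IsAcyclic ∧
  (∀ x ∈ e, ∀ y ∈ e, (SimpleGraph.fromEdgeSet (A : Set (Sym2 W))).Reachable x y)

/-- Number of blocks of the partition `P` that meet `e`. -/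
def pblocks [DecidableEq W] {U : Finset W} (P : Finpartition U) (e : Finset W) : ℕ :=
  (P.parts.filter fun B => (B ∩ e).Nonempty).card

/-- Number of edges in `A` whose two endpoints lie in distinct blocks of `P`. -/
def crossEdges [DecidableEq W] {U : Finset W} (P : Finpartition U) (A : Finset (Sym2 W)) : ℕ :=
  (A.filter fun s => ∀ B ∈ P.parts, ¬ (∀ v ∈ s, v ∈ B)).card

/-- `k`-weak partition connectivity of the multihypergraph with vertex set `U`
and hyperedge family `E`. -/
def WeaklyPC [DecidableEq W] {ι : Type*} [Fintype ι] (U : Finset W)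
    (E : ι → Finset W) (k : ℕ) : Prop :=
  ∀ P : Finpartition U, k * (P.parts.card - 1) ≤ ∑ i, (pblocks P (E i) - 1)

/-- The labelled edge set of the tree assignment `F`: each graph edge is tagged by
the hyperedge occurrence producing it. -/
def LEdges [DecidableEq W] {ι : Type*} [Fintype ι] [DecidableEq ι]
    (F : ι → Finset (Sym2 W)) : Finset (ι × Sym2 W) :=
  Finset.univ.biUnion fun i => (F i).image fun s => (i, s)

/-- An (ordered) `k`-tree decomposition of the labelled union of the tree assignment `F`:
each labelled edge gets a layer, and the labelled edges of each layer are (bijectively)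
the edge set of a spanning tree of `U`. -/
structure KTreeDecomp [DecidableEq W] {ι : Type*} [Fintype ι] [DecidableEq ι]
    (U : Finset W) (F : ι → Finset (Sym2 W)) (k : ℕ) where
  layer : ι × Sym2 W → Fin k
  tree : Fin k → Finset (Sym2 W)
  tree_isTree : ∀ j, IsTreeOn U (tree j)
  tree_eq : ∀ j, tree j = ((LEdges F).filter fun p => layer p = j).image Prod.snd
  layer_inj : ∀ p ∈ LEdges F, ∀ q ∈ LEdges F, layer p = layer q → p.2 = q.2 → p = q

/-- The signature of a `k`-tree decomposition: `sig D e = ∑ i, i • |E(T_i) ∩ E(F_e)|`. -/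
def sig [DecidableEq W] {ι : Type*} [Fintype ι] [DecidableEq ι] {U : Finset W}
    {F : ι → Finset (Sym2 W)} {k : ℕ} (D : KTreeDecomp U F k) (i : ι) : ℕ :=
  ∑ j : Fin k, j.1 * ((F i).filter fun s => D.layer (i, s) = j).card

/-- `H = (U, E)` has a `k`-distinguishable tree assignment. -/
def Distinguishable [DecidableEq W] {ι : Type*} [Fintype ι] [DecidableEq ι]
    (U : Finset W) (E : ι → Finset W) (k : ℕ) : Prop :=
  ∃ F : ι → Finset (Sym2 W), (∀ i, IsTreeOn (E i) (F i)) ∧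
    ∃ D : KTreeDecomp U F k, ∀ D' : KTreeDecomp U F k,
      (∀ i, sig D' i = sig D i) → ∀ p ∈ LEdges F, D'.layer p = D.layer p

/-- The star on `e` centered at `c`. -/
def starOn [DecidableEq W] (e : Finset W) (c : W) : Finset (Sym2 W) :=
  (e.erase c).image fun u => s(c, u)

/-- exact slack identity.  For a tree assignment `F` of `H` and a
`k`-tree decomposition `𝒯 = D` of its labelled union, for every partition `𝒫`:
`w_H(𝒫) - k(|𝒫| - 1) = B_𝒯(𝒫) - Λ_F(𝒫)` with `Λ_F(𝒫) ≥ 0` and `B_𝒯(𝒫) ≥ 0`;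
consequently `H` is `k`-weakly-partition-connected iff `Λ_F(𝒫) ≤ B_𝒯(𝒫)` for all `𝒫`. -/
lemma walk_exists_exit {G : SimpleGraph W} {x y : W} (w : G.Walk x y) (B : Finset W)
    (hx : x ∈ B) (hy : y ∉ B) : ∃ u v, u ∈ B ∧ v ∉ B ∧ s(u, v) ∈ w.edges := by
  induction w with
  | nil => exact absurd hx hy
  | @cons a b c h p ih =>
    by_cases hb : b ∈ B
    · obtain ⟨u, v, h1, h2, h3⟩ := ih hb hy
      exact ⟨u, v, h1, h2, by simp [SimpleGraph.Walk.edges_cons, h3]⟩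
    · exact ⟨a, b, hx, hb, by simp [SimpleGraph.Walk.edges_cons]⟩

lemma cross_main [DecidableEq W] (e : Finset W) (A : Finset (Sym2 W))
    (hend : ∀ s ∈ A, ∀ v ∈ s, v ∈ e)
    (hconn : ∀ x ∈ e, ∀ y ∈ e,
      (SimpleGraph.fromEdgeSet (A : Set (Sym2 W))).Reachable x y) :
    ∀ n (S : Finset (Finset W)), (∀ B ∈ S, ∀ B' ∈ S, B ≠ B' → Disjoint B B') →
      (A.filter fun s => ∀ B ∈ S, ¬ (∀ v ∈ s, v ∈ B)).card = n →
      (S.filter fun B => (B ∩ e).Nonempty).card ≤ n + 1 := by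
  intro n
  induction n using Nat.strong_induction_on with
  | _ n ih =>
    intro S hdisj hcard
    by_cases hp : (S.filter fun B => (B ∩ e).Nonempty).card ≤ 1
    · omega
    -- two distinct blocks meeting e
    obtain ⟨B1, hB1, B2, hB2, hne⟩ := Finset.one_lt_card.mp
      (show 1 < (S.filter fun B => (B ∩ e).Nonempty).card by omega)
    rw [Finset.mem_filter] at hB1 hB2
    obtain ⟨x, hx⟩ := hB1.2
    obtain ⟨y, hy⟩ := hB2.2
    rw [Finset.mem_inter] at hx hy
    have hyB1 : y ∉ B1 := fun h =>
      Finset.disjoint_left.mp (hdisj B1 hB1.1 B2 hB2.1 hne) h hy.1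
    obtain ⟨w⟩ := hconn x hx.2 y hy.2
    obtain ⟨u, v, huB, hvB, hs⟩ := walk_exists_exit w B1 hx.1 hyB1
    have hsA : s(u, v) ∈ A := by
      have := w.edges_subset_edgeSet hs
      rw [SimpleGraph.edgeSet_fromEdgeSet] at this
      exact this.1
    have hue : u ∈ e := hend _ hsA u (by simp)
    have hve : v ∈ e := hend _ hsA v (by simp)
    -- s(u,v) is crossing for S
    have hcrossuv : s(u, v) ∈ A.filter fun s => ∀ B ∈ S, ¬ (∀ w ∈ s, w ∈ B) := by
      refine Finset.mem_filter.mpr ⟨hsA, fun B hB hall => ?_⟩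
      have hu' : u ∈ B := hall u (by simp)
      have hv' : v ∈ B := hall v (by simp)
      have : B = B1 := by
        by_contra hne'
        exact Finset.disjoint_left.mp (hdisj B hB B1 hB1.1 hne') hu' huB
      exact hvB (this ▸ hv')
    have hn1 : 1 ≤ n := by
      rw [← hcard]; exact Finset.card_pos.mpr ⟨_, hcrossuv⟩
    by_cases hv : ∃ B' ∈ S, v ∈ B'
    · -- merge B1 and B'
      obtain ⟨B', hB'S, hvB'⟩ := hv
      have hB'ne : B' ≠ B1 := fun h => hvB (h ▸ hvB')
      set S' : Finset (Finset W) := insert (B1 ∪ B') ((S.erase B1).erase B') with hS'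
      have hsubBlock : ∀ B ∈ S, ∃ C ∈ S', B ⊆ C := by
        intro B hB
        by_cases h1 : B = B1
        · exact ⟨B1 ∪ B', by simp [hS'], h1 ▸ Finset.subset_union_left⟩
        by_cases h2 : B = B'
        · exact ⟨B1 ∪ B', by simp [hS'], h2 ▸ Finset.subset_union_right⟩
        · exact ⟨B, by simp [hS', Finset.mem_erase, h1, h2, hB], le_refl _⟩
      -- crossing edges of S' ⊆ erase of crossing of S
      have hsub : (A.filter fun s => ∀ B ∈ S', ¬ (∀ w ∈ s, w ∈ B)) ⊆
          (A.filter fun s => ∀ B ∈ S, ¬ (∀ w ∈ s, w ∈ B)).erase s(u, v) := by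
        intro s hsF
        rw [Finset.mem_filter] at hsF
        refine Finset.mem_erase.mpr ⟨?_, Finset.mem_filter.mpr ⟨hsF.1, fun B hB hall => ?_⟩⟩
        · rintro rfl
          exact hsF.2 (B1 ∪ B') (by simp [hS']) (by
            intro w hw
            rw [Sym2.mem_iff] at hw
            rcases hw with rfl | rfl
            · exact Finset.mem_union_left _ huB
            · exact Finset.mem_union_right _ hvB')
        · obtain ⟨C, hC, hBC⟩ := hsubBlock B hB
          exact hsF.2 C hC fun w hw => hBC (hall w hw)
      have hcard' : (A.filter fun s => ∀ B ∈ S', ¬ (∀ w ∈ s, w ∈ B)).card ≤ n - 1 := by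
        have := Finset.card_le_card hsub
        rwa [Finset.card_erase_of_mem hcrossuv, hcard] at this
      -- disjointness of S'
      have hdisj' : ∀ B ∈ S', ∀ C ∈ S', B ≠ C → Disjoint B C := by
        intro B hB C hC hBC
        rw [hS', Finset.mem_insert] at hB hC
        have herase : ∀ D, D ∈ (S.erase B1).erase B' → D ∈ S ∧ D ≠ B1 ∧ D ≠ B' := by
          intro D hD
          rw [Finset.mem_erase, Finset.mem_erase] at hD
          exact ⟨hD.2.2, hD.2.1, hD.1⟩
        rcases hB with rfl | hB <;> rcases hC with rfl | hC
        · exact absurd rfl hBC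
        · obtain ⟨hCS, hC1, hC2⟩ := herase C hC
          exact Finset.disjoint_union_left.mpr
            ⟨hdisj B1 hB1.1 C hCS (Ne.symm hC1), hdisj B' hB'S C hCS (Ne.symm hC2)⟩
        · obtain ⟨hBS, hb1, hb2⟩ := herase B hB
          exact (Finset.disjoint_union_left.mpr
            ⟨hdisj B1 hB1.1 B hBS (Ne.symm hb1), hdisj B' hB'S B hBS (Ne.symm hb2)⟩).symm
        · exact hdisj B (herase B hB).1 C (herase C hC).1 hBC
      set m := (A.filter fun s => ∀ B ∈ S', ¬ (∀ w ∈ s, w ∈ B)).card with hm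
      have hIH := ih m (by omega) S' hdisj' rfl
      -- relate p(S) and p(S')
      have hunionmem : B1 ∪ B' ∉ (S.erase B1).erase B' := by
        intro h
        rw [Finset.mem_erase, Finset.mem_erase] at h
        exact Finset.disjoint_left.mp (hdisj B1 hB1.1 _ h.2.2 (Ne.symm h.2.1)) huB
          (Finset.mem_union_left _ huB)
      have hB'e : (B' ∩ e).Nonempty := ⟨v, Finset.mem_inter.mpr ⟨hvB', hve⟩⟩
      have hpS' : ((S.filter fun B => (B ∩ e).Nonempty).card : ℤ) ≤
          ((S'.filter fun B => (B ∩ e).Nonempty).card : ℤ) + 1 := by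
        have h1 : (S.filter fun B => (B ∩ e).Nonempty) ⊆
            insert B1 (insert B' (((S.erase B1).erase B').filter fun B => (B ∩ e).Nonempty)) := by
          intro B hB
          rw [Finset.mem_filter] at hB
          by_cases e1 : B = B1
          · simp [e1]
          by_cases e2 : B = B'
          · simp [e2]
          · simp [Finset.mem_insert, Finset.mem_filter, Finset.mem_erase, e1, e2, hB.1, hB.2]
        have h2 : (((S.erase B1).erase B').filter fun B => (B ∩ e).Nonempty) ∪ {B1 ∪ B'} ⊆
            S'.filter fun B => (B ∩ e).Nonempty := by
          intro B hB
          rw [Finset.mem_union] at hB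
          rcases hB with hB | hB
          · rw [Finset.mem_filter] at hB ⊢
            exact ⟨by simp [hS', Finset.mem_insert, hB.1], hB.2⟩
          · rw [Finset.mem_singleton] at hB
            subst hB
            refine Finset.mem_filter.mpr ⟨by simp [hS'], ?_⟩
            exact ⟨u, Finset.mem_inter.mpr ⟨Finset.mem_union_left _ huB, hue⟩⟩
        have c1 := Finset.card_le_card h1
        have c2 := Finset.card_le_card h2
        have c3 : ((((S.erase B1).erase B').filter fun B => (B ∩ e).Nonempty) ∪ {B1 ∪ B'}).card
            = (((S.erase B1).erase B').filter fun B => (B ∩ e).Nonempty).card + 1 := by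
          rw [Finset.union_comm, ← Finset.insert_eq,
            Finset.card_insert_of_notMem (fun h => hunionmem (Finset.mem_filter.mp h).1)]
        have c4 := Finset.card_insert_le B1
          (insert B' (((S.erase B1).erase B').filter fun B => (B ∩ e).Nonempty))
        have c5 := Finset.card_insert_le B'
          (((S.erase B1).erase B').filter fun B => (B ∩ e).Nonempty)
        omega
      omega
    · -- v is in no block: enlarge B1 with v
      push_neg at hv
      set S' : Finset (Finset W) := insert (insert v B1) (S.erase B1) with hS'
      have hsubBlock : ∀ B ∈ S, ∃ C ∈ S', B ⊆ C := by
        intro B hB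
        by_cases h1 : B = B1
        · exact ⟨insert v B1, by simp [hS'], h1 ▸ Finset.subset_insert _ _⟩
        · exact ⟨B, by simp [hS', Finset.mem_erase, h1, hB], le_refl _⟩
      have hsub : (A.filter fun s => ∀ B ∈ S', ¬ (∀ w ∈ s, w ∈ B)) ⊆
          (A.filter fun s => ∀ B ∈ S, ¬ (∀ w ∈ s, w ∈ B)).erase s(u, v) := by
        intro s hsF
        rw [Finset.mem_filter] at hsF
        refine Finset.mem_erase.mpr ⟨?_, Finset.mem_filter.mpr ⟨hsF.1, fun B hB hall => ?_⟩⟩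
        · rintro rfl
          exact hsF.2 (insert v B1) (by simp [hS']) (by
            intro w hw
            rw [Sym2.mem_iff] at hw
            rcases hw with rfl | rfl
            · exact Finset.mem_insert_of_mem huB
            · exact Finset.mem_insert_self _ _)
        · obtain ⟨C, hC, hBC⟩ := hsubBlock B hB
          exact hsF.2 C hC fun w hw => hBC (hall w hw)
      have hcard' : (A.filter fun s => ∀ B ∈ S', ¬ (∀ w ∈ s, w ∈ B)).card ≤ n - 1 := by
        have := Finset.card_le_card hsub
        rwa [Finset.card_erase_of_mem hcrossuv, hcard] at this
      have hdisj' : ∀ B ∈ S', ∀ C ∈ S', B ≠ C → Disjoint B C := by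
        intro B hB C hC hBC
        rw [hS', Finset.mem_insert] at hB hC
        have herase : ∀ D, D ∈ S.erase B1 → D ∈ S ∧ D ≠ B1 :=
          fun D hD => ⟨Finset.mem_of_mem_erase hD, Finset.ne_of_mem_erase hD⟩
        have key : ∀ D ∈ S.erase B1, Disjoint (insert v B1) D := by
          intro D hD
          obtain ⟨hDS, hD1⟩ := herase D hD
          rw [Finset.disjoint_left]
          intro a ha haD
          rw [Finset.mem_insert] at ha
          rcases ha with rfl | ha
          · exact hv D hDS haD
          · exact Finset.disjoint_left.mp (hdisj B1 hB1.1 D hDS (Ne.symm hD1)) ha haD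
        rcases hB with rfl | hB <;> rcases hC with rfl | hC
        · exact absurd rfl hBC
        · exact key C hC
        · exact (key B hB).symm
        · exact hdisj B (herase B hB).1 C (herase C hC).1 hBC
      set m := (A.filter fun s => ∀ B ∈ S', ¬ (∀ w ∈ s, w ∈ B)).card with hm
      have hIH := ih m (by omega) S' hdisj' rfl
      have hinsmem : insert v B1 ∉ S.erase B1 := by
        intro h
        exact hv _ (Finset.mem_of_mem_erase h) (Finset.mem_insert_self _ _)
      have hpS' : (S.filter fun B => (B ∩ e).Nonempty).card ≤
          (S'.filter fun B => (B ∩ e).Nonempty).card := by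
        have h1 : (S.filter fun B => (B ∩ e).Nonempty) ⊆
            insert B1 ((S.erase B1).filter fun B => (B ∩ e).Nonempty) := by
          intro B hB
          rw [Finset.mem_filter] at hB
          by_cases e1 : B = B1
          · simp [e1]
          · simp [Finset.mem_insert, Finset.mem_filter, Finset.mem_erase, e1, hB.1, hB.2]
        have h2 : insert (insert v B1) ((S.erase B1).filter fun B => (B ∩ e).Nonempty) ⊆
            S'.filter fun B => (B ∩ e).Nonempty := by
          intro B hB
          rw [Finset.mem_insert] at hB
          rcases hB with rfl | hB
          · refine Finset.mem_filter.mpr ⟨by simp [hS'], ?_⟩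
            exact ⟨u, Finset.mem_inter.mpr ⟨Finset.mem_insert_of_mem huB, hue⟩⟩
          · rw [Finset.mem_filter] at hB ⊢
            exact ⟨by simp [hS', Finset.mem_insert, hB.1], hB.2⟩
        have c1 := Finset.card_le_card h1
        have c2 := Finset.card_le_card h2
        have c3 : (insert (insert v B1)
            ((S.erase B1).filter fun B => (B ∩ e).Nonempty)).card
            = ((S.erase B1).filter fun B => (B ∩ e).Nonempty).card + 1 :=
          Finset.card_insert_of_notMem (fun h => hinsmem (Finset.mem_filter.mp h).1)
        have c4 := Finset.card_insert_le B1 ((S.erase B1).filter fun B => (B ∩ e).Nonempty)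
        omega
      omega

lemma sum_tree_filter [DecidableEq W] {ι : Type*} [Fintype ι] [DecidableEq ι] {U : Finset W}
    {F : ι → Finset (Sym2 W)} {k : ℕ} (D : KTreeDecomp U F k)
    (q : Sym2 W → Prop) (hq : DecidablePred q) :
    ∑ j : Fin k, ((D.tree j).filter q).card = ∑ i, ((F i).filter q).card := by
  have step1 : ∀ j : Fin k, ((D.tree j).filter q).card
      = ((LEdges F).filter fun p => D.layer p = j ∧ q p.2).card := by
    intro j
    rw [D.tree_eq j, Finset.filter_image, Finset.card_image_of_injOn, Finset.filter_filter]
    intro p hp p' hp' hpp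
    rw [Finset.mem_coe, Finset.filter_filter, Finset.mem_filter] at hp hp'
    exact D.layer_inj p hp.1 p' hp'.1 (hp.2.1.trans hp'.2.1.symm) hpp
  rw [Finset.sum_congr rfl fun j _ => step1 j]
  have step2 : ∑ j : Fin k, ((LEdges F).filter fun p => D.layer p = j ∧ q p.2).card
      = ((LEdges F).filter fun p => q p.2).card := by
    rw [Finset.card_eq_sum_card_fiberwise (f := D.layer) (t := Finset.univ)
      (fun x _ => Finset.mem_univ _)]
    refine Finset.sum_congr rfl fun j _ => ?_
    rw [Finset.filter_filter]
    exact congrArg Finset.card (Finset.filter_congr fun p _ => by tauto)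
  rw [step2, LEdges, Finset.filter_biUnion, Finset.card_biUnion]
  · refine Finset.sum_congr rfl fun i _ => ?_
    rw [Finset.filter_image]
    rw [Finset.card_image_of_injective _ (fun a b h => (Prod.mk.injEq _ _ _ _).mp h |>.2)]
  · intro x _ y _ hxy
    simp only [Function.onFun]
    rw [Finset.disjoint_left]
    intro p hp hp'
    rw [Finset.mem_filter, Finset.mem_image] at hp hp'
    obtain ⟨a, _, rfl⟩ := hp.1
    obtain ⟨b, _, hb⟩ := hp'.1
    exact hxy ((Prod.mk.injEq _ _ _ _).mp hb).1.symm
set_option maxHeartbeats 1000000 in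
theorem stmt17 {V : Type*} [Fintype V] [DecidableEq V] {ι : Type*} [Fintype ι]
    [DecidableEq ι] (hV : 2 ≤ Fintype.card V)
    (E : ι → Finset V) (hE : ∀ i, 2 ≤ (E i).card)
    (F : ι → Finset (Sym2 V)) (hF : ∀ i, IsTreeOn (E i) (F i))
    (k : ℕ) (D : KTreeDecomp (Finset.univ : Finset V) F k) :
    (∀ P : Finpartition (Finset.univ : Finset V),
      (∑ i, ((pblocks P (E i) : ℤ) - 1)) - k * ((P.parts.card : ℤ) - 1)
        = ((∑ j : Fin k, (crossEdges P (D.tree j) : ℤ)) - k * ((P.parts.card : ℤ) - 1))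
          - ∑ i, ((crossEdges P (F i) : ℤ) - (pblocks P (E i) : ℤ) + 1)) ∧
    (∀ P : Finpartition (Finset.univ : Finset V),
      0 ≤ ∑ i, ((crossEdges P (F i) : ℤ) - (pblocks P (E i) : ℤ) + 1)) ∧
    (∀ P : Finpartition (Finset.univ : Finset V),
      0 ≤ (∑ j : Fin k, (crossEdges P (D.tree j) : ℤ)) - k * ((P.parts.card : ℤ) - 1)) ∧
    (WeaklyPC (Finset.univ : Finset V) E k ↔
      ∀ P : Finpartition (Finset.univ : Finset V),
        (∑ i, ((crossEdges P (F i) : ℤ) - (pblocks P (E i) : ℤ) + 1))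
          ≤ (∑ j : Fin k, (crossEdges P (D.tree j) : ℤ))
            - k * ((P.parts.card : ℤ) - 1)) := by
  classical
  have hdisjP : ∀ (P : Finpartition (Finset.univ : Finset V)),
      ∀ B ∈ P.parts, ∀ B' ∈ P.parts, B ≠ B' → Disjoint B B' :=
    fun P B hB B' hB' hne => P.disjoint hB hB' hne
  have hL1 : ∀ (P : Finpartition (Finset.univ : Finset V)) i,
      pblocks P (E i) ≤ crossEdges P (F i) + 1 := by
    intro P i
    exact cross_main (E i) (F i) (hF i).2.1 (hF i).2.2.2 _ P.parts (hdisjP P) rfl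
  have hL2 : ∀ (P : Finpartition (Finset.univ : Finset V)) (j : Fin k),
      P.parts.card ≤ crossEdges P (D.tree j) + 1 := by
    intro P j
    have htree := D.tree_isTree j
    have h := cross_main Finset.univ (D.tree j) htree.2.1 htree.2.2.2 _ P.parts (hdisjP P) rfl
    have heq : (P.parts.filter fun B => (B ∩ Finset.univ).Nonempty) = P.parts :=
      Finset.filter_true_of_mem fun B hB => by
        simpa [Finset.inter_univ] using P.nonempty_of_mem_parts hB
    rwa [heq] at h
  have hsum : ∀ (P : Finpartition (Finset.univ : Finset V)),
      ∑ j : Fin k, crossEdges P (D.tree j) = ∑ i, crossEdges P (F i) := by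
    intro P
    simp only [crossEdges]
    exact sum_tree_filter D _ _
  have key : ∀ P : Finpartition (Finset.univ : Finset V),
      (∑ i, ((pblocks P (E i) : ℤ) - 1)) - k * ((P.parts.card : ℤ) - 1)
        = ((∑ j : Fin k, (crossEdges P (D.tree j) : ℤ)) - k * ((P.parts.card : ℤ) - 1))
          - ∑ i, ((crossEdges P (F i) : ℤ) - (pblocks P (E i) : ℤ) + 1) := by
    intro P
    have e3 : (∑ j : Fin k, (crossEdges P (D.tree j) : ℤ)) = ∑ i, (crossEdges P (F i) : ℤ) := by
      exact_mod_cast congrArg (fun n : ℕ => (n : ℤ)) (hsum P)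
    have e1 : ∑ i, ((crossEdges P (F i) : ℤ) - (pblocks P (E i) : ℤ) + 1)
        = (∑ i, (crossEdges P (F i) : ℤ)) - (∑ i, (pblocks P (E i) : ℤ))
          + (Finset.univ : Finset ι).card := by
      rw [Finset.sum_add_distrib, Finset.sum_sub_distrib, Finset.sum_const, nsmul_eq_mul, mul_one]
    have e2 : ∑ i, ((pblocks P (E i) : ℤ) - 1)
        = (∑ i, (pblocks P (E i) : ℤ)) - (Finset.univ : Finset ι).card := by
      rw [Finset.sum_sub_distrib, Finset.sum_const, nsmul_eq_mul, mul_one]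
    rw [e1, e2, e3]
    ring
  have lamNN : ∀ P : Finpartition (Finset.univ : Finset V),
      0 ≤ ∑ i, ((crossEdges P (F i) : ℤ) - (pblocks P (E i) : ℤ) + 1) := by
    intro P
    refine Finset.sum_nonneg fun i _ => ?_
    have := hL1 P i
    omega
  have bNN : ∀ P : Finpartition (Finset.univ : Finset V),
      0 ≤ (∑ j : Fin k, (crossEdges P (D.tree j) : ℤ)) - k * ((P.parts.card : ℤ) - 1) := by
    intro P
    have h1 : ∀ j : Fin k, ((P.parts.card : ℤ) - 1) ≤ (crossEdges P (D.tree j) : ℤ) := by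
      intro j
      have := hL2 P j
      omega
    have h2 : ∑ j : Fin k, ((P.parts.card : ℤ) - 1)
        ≤ ∑ j : Fin k, (crossEdges P (D.tree j) : ℤ) :=
      Finset.sum_le_sum fun j _ => h1 j
    rw [Finset.sum_const, Finset.card_univ, Fintype.card_fin, nsmul_eq_mul] at h2
    linarith
  refine ⟨key, lamNN, bNN, ?_⟩
  -- translation between the ℕ and ℤ inequalities
  have hp1 : ∀ (P : Finpartition (Finset.univ : Finset V)) i, 1 ≤ pblocks P (E i) := by
    intro P i
    have hEi := hE i
    obtain ⟨x, hx⟩ := Finset.card_pos.mp (by omega : 0 < (E i).card)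
    obtain ⟨B, hB, hxB⟩ := P.exists_mem (Finset.mem_univ x)
    refine Finset.card_pos.mpr ⟨B, Finset.mem_filter.mpr ⟨hB, ⟨x, Finset.mem_inter.mpr ⟨hxB, hx⟩⟩⟩⟩
  have hc1 : ∀ P : Finpartition (Finset.univ : Finset V), 1 ≤ P.parts.card := by
    intro P
    refine Finset.card_pos.mpr (P.parts_nonempty ?_)
    have : Nonempty V := Fintype.card_pos_iff.mp (by omega)
    exact Finset.univ_nonempty.ne_empty
  have cast1 : ∀ P : Finpartition (Finset.univ : Finset V),
      ((∑ i, (pblocks P (E i) - 1) : ℕ) : ℤ) = ∑ i, ((pblocks P (E i) : ℤ) - 1) := by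
    intro P
    rw [Nat.cast_sum]
    exact Finset.sum_congr rfl fun i _ => by
      rw [Nat.cast_sub (hp1 P i), Nat.cast_one]
  have cast2 : ∀ P : Finpartition (Finset.univ : Finset V),
      ((k * (P.parts.card - 1) : ℕ) : ℤ) = k * ((P.parts.card : ℤ) - 1) := by
    intro P
    rw [Nat.cast_mul, Nat.cast_sub (hc1 P), Nat.cast_one]
  constructor
  · intro hW P
    have h := hW P
    have h' : ((k * (P.parts.card - 1) : ℕ) : ℤ) ≤ ((∑ i, (pblocks P (E i) - 1) : ℕ) : ℤ) :=
      Int.ofNat_le.mpr h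
    rw [cast1 P, cast2 P] at h'
    have := key P
    linarith
  · intro hB P
    have h := hB P
    have hk := key P
    have h' : ((k * (P.parts.card - 1) : ℕ) : ℤ) ≤ ((∑ i, (pblocks P (E i) - 1) : ℕ) : ℤ) := by
      rw [cast1 P, cast2 P]
      linarith
    exact_mod_cast h'

end
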